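/- Let N be a positive semi-definite Hermitian n×n matrix, v a unit-length eigenvector of N with eigenvalue λ > 0, and u ∈ ℂⁿ any vector. Then for every t ∈ ℝ, the matrix N + t(u v* + v u*) + (t²/λ) u u* is positive semi-definite. -/

import Mathlib

open Matrix
open scoped ComplexOrder

theorem vmv {n : ℕ} (a b x : Fin n → ℂ) :
    (vecMulVec a b) *ᵥ x = (b ⬝ᵥ x) • a := by
  ext i
  simp only [vecMulVec_apply, mulVec, dotProduct, Pi.smul_apply, smul_eq_mul, Finset.sum_mul]
  exact Finset.sum_congr rfl fun j _ => by ring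

/-- If `N` is positive semi-definite, `v` is a unit eigenvector of `N` with
eigenvalue `λ > 0`, and `u ∈ ℂⁿ`, then `N + t(uv* + vu*) + (t²/λ) uu*` is
positive semi-definite for every real `t`. -/
theorem psd_rank_one_perturbation {n : ℕ} (N : Matrix (Fin n) (Fin n) ℂ)
    (hN : N.PosSemidef) (v : Fin n → ℂ) (hv : star v ⬝ᵥ v = 1) (l : ℝ)
    (hl : 0 < l) (heig : N *ᵥ v = (l : ℂ) • v) (u : Fin n → ℂ) (t : ℝ) :
    (N + (t : ℂ) • (vecMulVec u (star v) + vecMulVec v (star u))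
        + ((t ^ 2 / l : ℝ) : ℂ) • vecMulVec u (star u)).PosSemidef := by
  have hl0 : (l : ℂ) ≠ 0 := by exact_mod_cast hl.ne'
  refine posSemidef_iff_dotProduct_mulVec.mpr ⟨?_, ?_⟩
  · have h1 : (vecMulVec u (star v))ᴴ = vecMulVec v (star u) := by
      ext i j; simp [vecMulVec_apply, conjTranspose_apply, mul_comm]
    have h2 : (vecMulVec v (star u))ᴴ = vecMulVec u (star v) := by
      ext i j; simp [vecMulVec_apply, conjTranspose_apply, mul_comm]
    have h3 : (vecMulVec u (star u))ᴴ = vecMulVec u (star u) := by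
      ext i j; simp [vecMulVec_apply, conjTranspose_apply, mul_comm]
    unfold Matrix.IsHermitian
    simp [conjTranspose_add, conjTranspose_smul, h1, h2, h3, hN.1.eq, add_comm]
  · intro x
    set b : ℂ := star v ⬝ᵥ x with hb
    set c : ℂ := star u ⬝ᵥ x with hc
    have hsb : star x ⬝ᵥ v = star b := by
      rw [hb, star_dotProduct]
    have hsc : star x ⬝ᵥ u = star c := by
      rw [hc, star_dotProduct]
    have hNv : star v ⬝ᵥ (N *ᵥ x) = (l : ℂ) * b := by
      rw [dotProduct_mulVec, ← hN.1.eq, ← star_mulVec, heig]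
      simp [hb, smul_dotProduct, star_smul]
    set y : Fin n → ℂ := x - b • v with hy
    have key : star y ⬝ᵥ (N *ᵥ y) = star x ⬝ᵥ (N *ᵥ x) - (l : ℂ) * (b * star b) := by
      simp only [hy, star_sub, star_smul, mulVec_sub, mulVec_smul, heig, sub_dotProduct,
        dotProduct_sub, smul_dotProduct, dotProduct_smul, smul_eq_mul, hNv, hsb, hv]
      ring
    have expand : star x ⬝ᵥ ((N + (t : ℂ) • (vecMulVec u (star v) + vecMulVec v (star u))
        + ((t ^ 2 / l : ℝ) : ℂ) • vecMulVec u (star u)) *ᵥ x)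
        = star x ⬝ᵥ (N *ᵥ x) + (t : ℂ) * (b * star c + c * star b)
          + (t : ℂ) ^ 2 / (l : ℂ) * (c * star c) := by
      push_cast
      simp only [add_mulVec, smul_mulVec, vmv, dotProduct_add, dotProduct_smul,
        smul_eq_mul, smul_add, ← hb, ← hc, hsb, hsc]
      ring_nf
    set s : ℂ := b + (t : ℂ) / (l : ℂ) * c with hs
    have hss : star s = star b + (t : ℂ) / (l : ℂ) * star c := by
      simp [hs, star_div₀, Complex.star_def, Complex.conj_ofReal]
    have hsplit : star x ⬝ᵥ ((N + (t : ℂ) • (vecMulVec u (star v) + vecMulVec v (star u))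
        + ((t ^ 2 / l : ℝ) : ℂ) • vecMulVec u (star u)) *ᵥ x)
        = star y ⬝ᵥ (N *ᵥ y) + (l : ℂ) * (s * star s) := by
      rw [expand, key, hss, hs]
      field_simp
      ring
    rw [hsplit]
    exact add_nonneg (hN.dotProduct_mulVec_nonneg y)
      (mul_nonneg (by exact_mod_cast (Complex.zero_le_real.mpr hl.le))
        (mul_star_self_nonneg s))
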